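/- Let S, T, U be finite real-valued sequences with |S| ≤ |T| ≤ |U|, and let d₂(S,T) := min over valid offsets j of the Euclidean distance between S and the window T[j..j+|S|-1]. Then d₂(S,U) ≤ d₂(S,T) + d₂(T,U) (the triangle inequality holds along the length chain). -/

import Mathlib

/-- Windowed Euclidean distance between a sequence of length `n` (given by `S`)
and a sequence of length `m` (given by `T`), assuming `n ≤ m`. -/
noncomputable def d2 (n m : ℕ) (S T : ℕ → ℝ) : ℝ :=
  (Finset.range (m - n + 1)).inf' (Finset.nonempty_range_iff.mpr (Nat.succ_ne_zero _))
    (fun j => Real.sqrt (∑ i ∈ Finset.range n, (S i - T (i + j)) ^ 2))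

lemma sqrt_sum_sq_add_le (n : ℕ) (f g : ℕ → ℝ) :
    Real.sqrt (∑ i ∈ Finset.range n, (f i + g i) ^ 2) ≤
      Real.sqrt (∑ i ∈ Finset.range n, f i ^ 2) +
        Real.sqrt (∑ i ∈ Finset.range n, g i ^ 2) := by
  let x : EuclideanSpace ℝ (Fin n) := WithLp.toLp 2 (fun i => f i)
  let y : EuclideanSpace ℝ (Fin n) := WithLp.toLp 2 (fun i => g i)
  have h := norm_add_le x y
  have hx : ‖x‖ = Real.sqrt (∑ i ∈ Finset.range n, f i ^ 2) := by
    rw [EuclideanSpace.norm_eq, ← Fin.sum_univ_eq_sum_range (fun i => f i ^ 2)]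
    simp [x, sq_abs]
  have hy : ‖y‖ = Real.sqrt (∑ i ∈ Finset.range n, g i ^ 2) := by
    rw [EuclideanSpace.norm_eq, ← Fin.sum_univ_eq_sum_range (fun i => g i ^ 2)]
    simp [y, sq_abs]
  have hxy : ‖x + y‖ = Real.sqrt (∑ i ∈ Finset.range n, (f i + g i) ^ 2) := by
    rw [EuclideanSpace.norm_eq,
      ← Fin.sum_univ_eq_sum_range (fun i => (f i + g i) ^ 2)]
    simp [x, y, sq_abs]
  rw [hx, hy, hxy] at h
  exact h

theorem d2_chain_triangle (n m k : ℕ) (hnm : n ≤ m) (hmk : m ≤ k)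
    (S T U : ℕ → ℝ) :
    d2 n k S U ≤ d2 n m S T + d2 m k T U := by
  obtain ⟨j₁, hj₁mem, hj₁⟩ := Finset.exists_mem_eq_inf'
    (Finset.nonempty_range_iff.mpr (Nat.succ_ne_zero (m - n)))
    (fun j => Real.sqrt (∑ i ∈ Finset.range n, (S i - T (i + j)) ^ 2))
  obtain ⟨j₂, hj₂mem, hj₂⟩ := Finset.exists_mem_eq_inf'
    (Finset.nonempty_range_iff.mpr (Nat.succ_ne_zero (k - m)))
    (fun j => Real.sqrt (∑ i ∈ Finset.range m, (T i - U (i + j)) ^ 2))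
  rw [Finset.mem_range] at hj₁mem hj₂mem
  have hj₁le : j₁ ≤ m - n := by omega
  have hj₂le : j₂ ≤ k - m := by omega
  have hmem : j₁ + j₂ ∈ Finset.range (k - n + 1) := by
    rw [Finset.mem_range]; omega
  have step1 : d2 n k S U ≤
      Real.sqrt (∑ i ∈ Finset.range n, (S i - U (i + (j₁ + j₂))) ^ 2) :=
    Finset.inf'_le _ hmem
  have tri : Real.sqrt (∑ i ∈ Finset.range n, (S i - U (i + (j₁ + j₂))) ^ 2) ≤
      Real.sqrt (∑ i ∈ Finset.range n, (S i - T (i + j₁)) ^ 2) +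
        Real.sqrt (∑ i ∈ Finset.range n, (T (i + j₁) - U (i + (j₁ + j₂))) ^ 2) := by
    have := sqrt_sum_sq_add_le n (fun i => S i - T (i + j₁))
      (fun i => T (i + j₁) - U (i + (j₁ + j₂)))
    simpa using this
  have shift : Real.sqrt (∑ i ∈ Finset.range n, (T (i + j₁) - U (i + (j₁ + j₂))) ^ 2) ≤
      Real.sqrt (∑ i ∈ Finset.range m, (T i - U (i + j₂)) ^ 2) := by
    apply Real.sqrt_le_sqrt
    have heq : ∑ i ∈ Finset.range n, (T (i + j₁) - U (i + (j₁ + j₂))) ^ 2 =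
        ∑ i ∈ Finset.Ico j₁ (j₁ + n), (T i - U (i + j₂)) ^ 2 := by
      rw [Finset.sum_Ico_eq_sum_range]
      simp only [Nat.add_sub_cancel_left]
      apply Finset.sum_congr rfl
      intro i _
      have h1 : i + j₁ = j₁ + i := by omega
      have h2 : i + (j₁ + j₂) = j₁ + i + j₂ := by omega
      rw [h1, h2]
    rw [heq]
    apply Finset.sum_le_sum_of_subset_of_nonneg
    · intro x hx
      rw [Finset.mem_Ico] at hx
      rw [Finset.mem_range]
      omega
    · intro i _ _
      positivity
  calc d2 n k S U ≤ _ := step1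
    _ ≤ _ := tri
    _ ≤ Real.sqrt (∑ i ∈ Finset.range n, (S i - T (i + j₁)) ^ 2) +
        Real.sqrt (∑ i ∈ Finset.range m, (T i - U (i + j₂)) ^ 2) := by
          linarith
    _ = d2 n m S T + d2 m k T U := by rw [d2, d2, ← hj₁, ← hj₂]
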